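/- Let L ⊆ A be a bracket-closed subspace, m ∈ ℕ, and let w_1, …, w_m ∈ L be homogeneous elements such that w_i² = 0 whenever p_{w_i w_i}² = 1 (1 ≤ i ≤ m). If p_{w_i w_j}·p_{w_j w_i} ≠ 1 whenever i ≠ j and w_i ≠ w_j, then for all exponents a_1, …, a_m ∈ ℕ₀ the product w_1^{a_1} w_2^{a_2} ⋯ w_m^{a_m} lies in L + F·1. -/

import Mathlib

/-- An `F`-subspace `L` of a `G`-graded algebra `A` is *bracket-closed* (w.r.t. the
bicharacter `χ`) if it is spanned by its homogeneous elements and is closed under the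
braided bracket `[u,v] = vu − p_{vu}·uv` of homogeneous elements, where
`p_{uv} = χ (deg u) (deg v)`. -/
def IsBracketClosed {F A : Type*} (G : Type*) [Field F] [AddCommGroup G]
    [Ring A] [Algebra F A]
    (𝒜 : G → Submodule F A) (χ : G → G → Fˣ) (L : Submodule F A) : Prop :=
  L = Submodule.span F {a : A | a ∈ L ∧ ∃ g : G, a ∈ 𝒜 g} ∧
    ∀ (g h : G), ∀ u ∈ 𝒜 g, ∀ v ∈ 𝒜 h,
      u ∈ L → v ∈ L → v * u - (χ h g : F) • (u * v) ∈ L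

section Aux

variable {F A G : Type*} [Field F] [AddCommGroup G] [Ring A] [Algebra F A]
variable {𝒜 : G → Submodule F A} {χ : G → G → Fˣ} {L : Submodule F A}

private lemma smul_cancel_mem {c : F} {x : A} (hc : c ≠ 0) (h : c • x ∈ L) : x ∈ L := by
  have := L.smul_mem c⁻¹ h
  rwa [smul_smul, inv_mul_cancel₀ hc, one_smul] at this

private lemma swap_mem (hL : IsBracketClosed G 𝒜 χ L) {g h : G} {u v : A}
    (hu : u ∈ 𝒜 g) (hv : v ∈ 𝒜 h) (huL : u ∈ L) (hvL : v ∈ L)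
    (huv : u * v ∈ L) : v * u ∈ L := by
  have hb := hL.2 g h u hu v hv huL hvL
  have := L.add_mem hb (L.smul_mem ((χ h g : F)) huv)
  rwa [sub_add_cancel] at this

private lemma pair_mem (hL : IsBracketClosed G 𝒜 χ L) {g h : G} {u v : A}
    (hu : u ∈ 𝒜 g) (hv : v ∈ 𝒜 h) (huL : u ∈ L) (hvL : v ∈ L)
    (hq : (χ g h : F) * (χ h g : F) ≠ 1) : u * v ∈ L := by
  have b1 := hL.2 g h u hu v hv huL hvL
  have b2 := hL.2 h g v hv u hu hvL huL
  have hsum := L.add_mem b2 (L.smul_mem ((χ g h : F)) b1)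
  have he : (u * v - (χ g h : F) • (v * u)) +
      (χ g h : F) • (v * u - (χ h g : F) • (u * v)) =
      (1 - (χ g h : F) * (χ h g : F)) • (u * v) := by module
  rw [he] at hsum
  exact smul_cancel_mem (sub_ne_zero.mpr (Ne.symm hq)) hsum

private lemma triple_mem [SetLike.GradedMonoid 𝒜] (hL : IsBracketClosed G 𝒜 χ L)
    (hχ1 : ∀ g h k : G, χ (g + h) k = χ g k * χ h k)
    (hχ2 : ∀ g h k : G, χ g (h + k) = χ g h * χ g k)
    {g h γ : G} {x y c : A}
    (hx : x ∈ 𝒜 g) (hy : y ∈ 𝒜 h) (hc : c ∈ 𝒜 γ)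
    (hxL : x ∈ L) (hyL : y ∈ L) (hcL : c ∈ L)
    (hyc : y * c ∈ L) (hxy : x * y ∈ L) (hcx : c * x ∈ L)
    (hq : (χ g h : F) * (χ h g : F) ≠ 1) : x * (y * c) ∈ L := by
  have r1 := hL.2 g (h + γ) x hx (y * c) (SetLike.mul_mem_graded hy hc) hxL hyc
  have r2 := hL.2 (g + h) γ (x * y) (SetLike.mul_mem_graded hx hy) c hc hxy hcL
  have r3 := hL.2 h (γ + g) y hy (c * x) (SetLike.mul_mem_graded hc hx) hyL hcx
  rw [hχ1, Units.val_mul] at r1 r3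
  rw [hχ2, Units.val_mul] at r2
  have hE := L.sub_mem (L.sub_mem r2 r3) (L.smul_mem ((χ γ h : F) * (χ g h : F)) r1)
  have key : (c * (x * y) - ((χ γ g : F) * (χ γ h : F)) • ((x * y) * c)) -
      ((c * x) * y - ((χ γ h : F) * (χ g h : F)) • (y * (c * x))) -
      ((χ γ h : F) * (χ g h : F)) •
        ((y * c) * x - ((χ h g : F) * (χ γ g : F)) • (x * (y * c))) =
      (((χ γ g : F) * (χ γ h : F)) * ((χ g h : F) * (χ h g : F) - 1)) • (x * (y * c)) := by
    simp only [mul_assoc]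
    module
  rw [key] at hE
  refine smul_cancel_mem ?_ hE
  exact mul_ne_zero (mul_ne_zero (Units.ne_zero _) (Units.ne_zero _))
    (sub_ne_zero.mpr hq)

private lemma chi_zero_right (hχ2 : ∀ g h k : G, χ g (h + k) = χ g h * χ g k) (g : G) :
    χ g 0 = 1 := by
  have := hχ2 g 0 0
  rw [add_zero] at this
  exact (left_eq_mul.mp this)

private lemma chi_nsmul_right (hχ2 : ∀ g h k : G, χ g (h + k) = χ g h * χ g k)
    (g h : G) (n : ℕ) : χ g (n • h) = χ g h ^ n := by
  induction n with
  | zero => simpa using chi_zero_right hχ2 g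
  | succ n ih => rw [succ_nsmul, hχ2, ih, pow_succ]

private lemma chi_zero_left (hχ1 : ∀ g h k : G, χ (g + h) k = χ g k * χ h k) (g : G) :
    χ 0 g = 1 := by
  have := hχ1 0 0 g
  rw [add_zero] at this
  exact (left_eq_mul.mp this)

private lemma chi_nsmul_left (hχ1 : ∀ g h k : G, χ (g + h) k = χ g k * χ h k)
    (g h : G) (n : ℕ) : χ (n • g) h = χ g h ^ n := by
  induction n with
  | zero => simpa using chi_zero_left hχ1 h
  | succ n ih => rw [succ_nsmul, hχ1, ih, pow_succ]

private lemma split_or_const {m : ℕ} (w : Fin m → A) :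
    ∀ l : List (Fin m),
      (∃ P s t B, l = P ++ s :: t :: B ∧ w s ≠ w t) ∨ (∀ a ∈ l, ∀ b ∈ l, w a = w b) := by
  intro l
  induction l with
  | nil => right; intro a ha; exact absurd ha List.not_mem_nil
  | cons x l ih =>
    cases l with
    | nil =>
      right; intro a ha b hb
      rw [List.mem_singleton] at ha hb; rw [ha, hb]
    | cons y r =>
      by_cases hxy : w x = w y
      · rcases ih with ⟨P, s, t, B, heq, hst⟩ | hconst
        · left
          exact ⟨x :: P, s, t, B, by rw [List.cons_append, heq], hst⟩
        · right
          have key : ∀ a ∈ x :: y :: r, w a = w x := by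
            intro a ha
            rcases List.mem_cons.mp ha with rfl | h
            · rfl
            · exact (hconst a h y List.mem_cons_self).trans hxy.symm
          intro a ha b hb
          rw [key a ha, key b hb]
      · left; exact ⟨[], x, y, r, rfl, hxy⟩

end Aux

theorem stmt_10 (F : Type*) [Field F] [CharZero F]
    (G : Type*) [AddCommGroup G] [DecidableEq G]
    (A : Type*) [Ring A] [Algebra F A]
    (𝒜 : G → Submodule F A) [GradedAlgebra 𝒜]
    (χ : G → G → Fˣ)
    (hχ1 : ∀ g h k : G, χ (g + h) k = χ g k * χ h k)
    (hχ2 : ∀ g h k : G, χ g (h + k) = χ g h * χ g k)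
    (L : Submodule F A) (hL : IsBracketClosed G 𝒜 χ L)
    (m : ℕ) (hm : 0 < m)
    (d : Fin m → G) (w : Fin m → A)
    (hhom : ∀ i, w i ∈ 𝒜 (d i)) (hwL : ∀ i, w i ∈ L)
    (hsq : ∀ i, ((χ (d i) (d i) : F)) ^ 2 = 1 → w i * w i = 0)
    (hne : ∀ i j, i ≠ j → w i ≠ w j →
      (χ (d i) (d j) : F) * (χ (d j) (d i) : F) ≠ 1)
    (a : Fin m → ℕ) :
    (List.ofFn fun i => w i ^ a i).prod ∈ L ⊔ Submodule.span F {(1 : A)} := by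
  -- Main claim: every nonempty word in the letters `w i` lies in `L`.
  have main : ∀ N (l : List (Fin m)), l.length = N → l ≠ [] → (l.map w).prod ∈ L := by
    intro N
    induction N using Nat.strong_induction_on with
    | _ N IH =>
    intro l hlen hnil
    subst hlen
    have IH' : ∀ l' : List (Fin m), l'.length < l.length → l' ≠ [] → (l'.map w).prod ∈ L :=
      fun l' hl hn => IH _ hl l' rfl hn
    clear IH
    rcases l with _ | ⟨i0, l⟩
    · exact absurd rfl hnil
    rcases l with _ | ⟨i1, r⟩
    · simpa using hwL i0
    rcases split_or_const w (i0 :: i1 :: r) with ⟨P, s, t, B, heq, hwst⟩ | hconst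
    · -- there is an adjacent pair of distinct letters
      have hst : s ≠ t := fun hstt => hwst (by rw [hstt])
      have hq : (χ (d s) (d t) : F) * (χ (d t) (d s) : F) ≠ 1 := hne s t hst hwst
      have front : ∀ B' : List (Fin m), B'.length + 2 = (i0 :: i1 :: r).length →
          w s * (w t * ((B'.map w).prod)) ∈ L := by
        intro B' hlB
        rcases B' with _ | ⟨b, B''⟩
        · simpa using pair_mem hL (hhom s) (hhom t) (hwL s) (hwL t) hq
        · simp only [List.length_cons] at hlB
          have hlen1 : (b :: B'').length < (i0 :: i1 :: r).length := by
            simp only [List.length_cons]; omega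
          have hlen2 : (t :: b :: B'').length < (i0 :: i1 :: r).length := by
            simp only [List.length_cons]; omega
          have hlen3 : ([s, t] : List (Fin m)).length < (i0 :: i1 :: r).length := by
            simp only [List.length_cons, List.length_nil]; omega
          have hlen4 : ((b :: B'') ++ [s]).length < (i0 :: i1 :: r).length := by
            simp only [List.length_append, List.length_cons, List.length_nil]; omega
          have hcL : (((b :: B'').map w).prod) ∈ L := IH' _ hlen1 (List.cons_ne_nil _ _)
          have hcA : (((b :: B'').map w).prod) ∈ 𝒜 (((b :: B'').map d).sum) :=
            SetLike.list_prod_map_mem_graded _ d w (fun j _ => hhom j)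
          have hycL : w t * ((b :: B'').map w).prod ∈ L := by
            have := IH' _ hlen2 (List.cons_ne_nil _ _)
            simpa using this
          have hxyL : w s * w t ∈ L := by
            have := IH' _ hlen3 (List.cons_ne_nil _ _)
            simpa using this
          have hcxL : ((b :: B'').map w).prod * w s ∈ L := by
            have := IH' _ hlen4 (by simp)
            simpa [List.map_append, List.prod_append, mul_assoc] using this
          exact triple_mem hL hχ1 hχ2 (hhom s) (hhom t) hcA (hwL s) (hwL t) hcL
            hycL hxyL hcxL hq
      rcases P with _ | ⟨p0, P'⟩
      · simp only [List.nil_append] at heq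
        rw [heq]
        have hlB : B.length + 2 = (i0 :: i1 :: r).length := by
          rw [heq]; simp
        have := front B hlB
        simpa using this
      · have huL : ((p0 :: P').map w).prod ∈ L := by
          refine IH' _ ?_ (List.cons_ne_nil _ _)
          rw [heq]; simp only [List.length_append, List.length_cons]; omega
        have hvL : ((s :: t :: B).map w).prod ∈ L := by
          refine IH' _ ?_ (List.cons_ne_nil _ _)
          rw [heq]; simp only [List.length_append, List.length_cons]; omega
        have huA : ((p0 :: P').map w).prod ∈ 𝒜 (((p0 :: P').map d).sum) :=
          SetLike.list_prod_map_mem_graded _ d w (fun j _ => hhom j)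
        have hvA : ((s :: t :: B).map w).prod ∈ 𝒜 (((s :: t :: B).map d).sum) :=
          SetLike.list_prod_map_mem_graded _ d w (fun j _ => hhom j)
        have hvu : ((s :: t :: B).map w).prod * ((p0 :: P').map w).prod ∈ L := by
          have hlB : (B ++ p0 :: P').length + 2 = (i0 :: i1 :: r).length := by
            rw [heq]; simp only [List.length_append, List.length_cons]; omega
          have := front (B ++ p0 :: P') hlB
          simpa [List.map_append, List.prod_append, mul_assoc] using this
        have := swap_mem hL hvA huA hvL huL hvu
        rw [heq]
        simpa [List.map_append, List.prod_append, mul_assoc] using this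
    · -- all letters are equal as elements of A
      have hw0 : ∀ b ∈ (i0 :: i1 :: r), w b = w i0 :=
        fun b hb => hconst b hb i0 List.mem_cons_self
      by_cases hd : ∀ b ∈ (i0 :: i1 :: r), d b = d i0
      · -- a power of a single homogeneous letter
        have hprod : ((i0 :: i1 :: r).map w).prod = w i0 ^ (r.length + 2) := by
          have := List.prod_eq_pow_card ((i0 :: i1 :: r).map w) (w i0)
            (fun z hz => by
              obtain ⟨b, hb, rfl⟩ := List.mem_map.mp hz
              exact hw0 b hb)
          simpa using this
        rw [hprod]
        have hpow : ∀ k, 1 ≤ k → k < r.length + 2 → w i0 ^ k ∈ L := by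
          intro k h1 h2
          have := IH' (List.replicate k i0)
            (by simp only [List.length_replicate, List.length_cons]; omega)
            (List.ne_nil_of_length_pos (by simp only [List.length_replicate]; omega))
          simpa [List.map_replicate, List.prod_replicate] using this
        by_cases hp2 : (χ (d i0) (d i0) : F) ^ 2 = 1
        · have hxx := hsq i0 hp2
          have he : w i0 ^ (r.length + 2) = w i0 ^ r.length * (w i0 * w i0) := by
            rw [pow_succ, pow_succ, mul_assoc]
          rw [he, hxx, mul_zero]
          exact L.zero_mem
        · by_cases h1 : (χ (d i0) (d i0) : F) ^ (r.length + 1) = 1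
          · -- need r.length ≥ 1; split off a square
            have hK : r.length ≠ 0 := by
              rintro h0
              rw [h0, pow_one] at h1
              exact hp2 (by rw [h1]; norm_num)
            obtain ⟨K', hKe⟩ : ∃ K', r.length = K' + 1 := ⟨r.length - 1, by omega⟩
            have huL' := hpow (K' + 1) (by omega) (by omega)
            have hvL' := hpow 2 (by omega) (by omega)
            have hbr := hL.2 ((K' + 1) • d i0) (2 • d i0) (w i0 ^ (K' + 1))
              (SetLike.pow_mem_graded _ (hhom i0)) (w i0 ^ 2)
              (SetLike.pow_mem_graded _ (hhom i0)) huL' hvL'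
            rw [← pow_add, ← pow_add] at hbr
            have hcast : (χ (2 • d i0) ((K' + 1) • d i0) : F) =
                (χ (d i0) (d i0) : F) ^ ((K' + 1) * 2) := by
              rw [chi_nsmul_left hχ1, chi_nsmul_right hχ2, ← pow_mul]
              push_cast
              ring
            rw [hcast] at hbr
            have hne1 : (χ (d i0) (d i0) : F) ^ ((K' + 1) * 2) ≠ 1 := by
              intro hcontra
              apply hp2
              have e : (χ (d i0) (d i0) : F) ^ ((K' + 1) * 2) * (χ (d i0) (d i0) : F) ^ 2 =
                  ((χ (d i0) (d i0) : F) ^ (K' + 1 + 1)) ^ 2 := by ring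
              rw [hcontra, one_mul] at e
              rw [hKe] at h1
              rw [h1, one_pow] at e
              exact e
            have he2 : 2 + (K' + 1) = K' + 1 + 2 := by omega
            rw [he2] at hbr
            have he3 : w i0 ^ (K' + 1 + 2) -
                (χ (d i0) (d i0) : F) ^ ((K' + 1) * 2) • w i0 ^ (K' + 1 + 2) =
                (1 - (χ (d i0) (d i0) : F) ^ ((K' + 1) * 2)) • w i0 ^ (K' + 1 + 2) := by
              module
            rw [he3] at hbr
            have := smul_cancel_mem (sub_ne_zero.mpr (Ne.symm hne1)) hbr
            rw [hKe]
            exact this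
          · have huL' := hpow (r.length + 1) (by omega) (by omega)
            have hbr := hL.2 ((r.length + 1) • d i0) (d i0) (w i0 ^ (r.length + 1))
              (SetLike.pow_mem_graded _ (hhom i0)) (w i0) (hhom i0) huL' (hwL i0)
            rw [← pow_succ', ← pow_succ] at hbr
            have hcast : (χ (d i0) ((r.length + 1) • d i0) : F) =
                (χ (d i0) (d i0) : F) ^ (r.length + 1) := by
              rw [chi_nsmul_right hχ2]
              push_cast
              ring
            rw [hcast] at hbr
            have he3 : w i0 ^ (r.length + 1 + 1) -
                (χ (d i0) (d i0) : F) ^ (r.length + 1) • w i0 ^ (r.length + 1 + 1) =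
                (1 - (χ (d i0) (d i0) : F) ^ (r.length + 1)) • w i0 ^ (r.length + 1 + 1) := by
              module
            rw [he3] at hbr
            have := smul_cancel_mem (sub_ne_zero.mpr (Ne.symm h1)) hbr
            have h22 : r.length + 1 + 1 = r.length + 2 := by omega
            rw [h22] at this
            exact this
      · -- two letters equal as elements but of different degrees: the letter is zero
        push_neg at hd
        obtain ⟨b, hb, hdb⟩ := hd
        have hwb : w b = w i0 := hw0 b hb
        have hz : w b = 0 := by
          by_contra hnz
          exact hdb (DirectSum.degree_eq_of_mem_mem 𝒜 (hhom b)
            (by rw [hwb]; exact hhom i0) hnz)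
        have hmem : (0 : A) ∈ (i0 :: i1 :: r).map w := List.mem_map.mpr ⟨b, hb, hz⟩
        rw [List.prod_eq_zero hmem]
        exact L.zero_mem
  -- build the word from the exponents
  have hword : ∀ ls : List (Fin m), ∃ l : List (Fin m),
      (l.map w).prod = (ls.map fun i => w i ^ a i).prod := by
    intro ls
    induction ls with
    | nil => exact ⟨[], by simp⟩
    | cons i ls ih =>
      obtain ⟨l, hl⟩ := ih
      exact ⟨List.replicate (a i) i ++ l, by
        simp [List.map_append, List.prod_append, List.map_replicate,
          List.prod_replicate, hl]⟩
  rw [List.ofFn_eq_map]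
  obtain ⟨l, hl⟩ := hword (List.finRange m)
  rw [← hl]
  rcases eq_or_ne l [] with rfl | hnil
  · simp only [List.map_nil, List.prod_nil]
    exact Submodule.mem_sup_right (Submodule.mem_span_singleton_self 1)
  · exact Submodule.mem_sup_left (main l.length l rfl hnil)
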